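/- (Recursion for the Z-sum, the analogue of (IW) used in the appendix.) For any map g : α → α → R and any k ≥ 2, Z̃_g((a_1,b_1), p_2, …, p_k) − Z̃_g((b_1,a_1), p_2, …, p_k) = Σ_{l=2}^k [ Z̃_g((a_l,b_1), P_l) · g(b_l, a_1) + Z̃_g((b_1,a_l), P_l) · g(a_1, b_l) − Z̃_g((b_l,b_1), P_l) · g(a_l, a_1) − Z̃_g((b_1,b_l), P_l) · g(a_1, a_l) ], where p_i = (a_i,b_i) and P_l denotes the (k−2)-tuple (a_2,b_2), …, (a_{l−1},b_{l−1}), (a_{l+1},b_{l+1}), …, (a_k,b_k), so that each Z̃_g on the right-hand side is taken over k−1 pairs. -/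

import Mathlib

/-- The sign of a Boolean: `true ↦ 1`, `false ↦ -1` (encoding `ε ∈ {1, -1}`). -/
def signR (R : Type*) [CommRing R] (e : Bool) : R := if e then 1 else -1

/-- `B_i(ε)`: the second component `b_i` if `ε = 1`, the first component `a_i` if `ε = -1`. -/
def Bc {α : Type*} (q : α × α) (e : Bool) : α := if e then q.2 else q.1

/-- `A_i(ε)`: the first component `a_i` if `ε = 1`, the second component `b_i` if `ε = -1`. -/
def Ac {α : Type*} (q : α × α) (e : Bool) : α := if e then q.1 else q.2

/-- `Z̃_h((a_1,b_1), …, (a_k,b_k)) = Σ_{ε ∈ {1,−1}^k, ε_1 = 1} Σ_{σ ∈ S'_k} ∏_{i=1}^k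
ε_{σ(i)} · h(B_{σ(i)}(ε_{σ(i)}), A_{σ(i+1)}(ε_{σ(i+1)}))`, where `S'_k` is the set
of permutations fixing the first index, and indices are cyclic (`σ(k+1) := σ(1)`). -/
def Ztilde {R α : Type*} [CommRing R] (h : α → α → R) {k : ℕ} (p : Fin k → α × α) : R :=
  ∑ ε ∈ Finset.univ.filter (fun ε : Fin k → Bool => ∀ i : Fin k, (i : ℕ) = 0 → ε i = true),
    ∑ σ ∈ Finset.univ.filter (fun σ : Equiv.Perm (Fin k) => ∀ i : Fin k, (i : ℕ) = 0 → σ i = i),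
      ∏ i : Fin k,
        signR R (ε (σ i)) * h (Bc (p (σ i)) (ε (σ i)))
          (Ac (p (σ (finRotate k i))) (ε (σ (finRotate k i))))


namespace ZtildeAux

variable {R α : Type*} [CommRing R]

/-- chain product: `g x (A q₁) * g (B q₁) (A q₂) * ⋯ * g (B q_r) y`. -/
def chaing (g : α → α → R) : α → α → List ((α × α) × Bool) → R
  | x, y, [] => g x y
  | x, y, q :: t => g x (Ac q.1 q.2) * chaing g (Bc q.1 q.2) y t

lemma prod_cycle_eq_chaing (g : α → α → R) : ∀ {m : ℕ} (u : Fin (m + 1) → (α × α) × Bool),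
    (∏ t : Fin (m + 1), g (Bc (u t).1 (u t).2)
       (Ac (u (finRotate (m + 1) t)).1 (u (finRotate (m + 1) t)).2))
    = chaing g (Bc (u 0).1 (u 0).2) (Ac (u 0).1 (u 0).2) (List.ofFn (u ∘ Fin.succ)) := by
  intro m
  induction m with
  | zero =>
    intro u
    simp [chaing, List.ofFn_succ]
  | succ m ih =>
    intro u
    set u' : Fin (m + 1) → (α × α) × Bool :=
      Fin.cons ((Ac (u 0).1 (u 0).2, Bc (u 1).1 (u 1).2), true) (fun i => u i.succ.succ) with hu'
    have hB : ∀ i : Fin (m + 1), Bc (u' i).1 (u' i).2 = Bc (u i.succ).1 (u i.succ).2 := by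
      intro i
      induction i using Fin.cases with
      | zero => simp [hu', Bc]; rfl
      | succ j => simp [hu']
    have hA : ∀ i : Fin (m + 1),
        Ac (u' (finRotate (m + 1) i)).1 (u' (finRotate (m + 1) i)).2
          = Ac (u (finRotate (m + 2) i.succ)).1 (u (finRotate (m + 2) i.succ)).2 := by
      intro i
      induction i using Fin.lastCases with
      | last =>
        have h1 : finRotate (m + 1) (Fin.last m) = 0 := finRotate_last
        have h2 : (Fin.last m).succ = Fin.last (m + 1) := rfl
        rw [h1, h2, finRotate_last]
        simp [hu', Ac]
      | cast j =>
        have h1 : finRotate (m + 1) j.castSucc = j.succ := by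
          rw [finRotate_succ_apply, Fin.coeSucc_eq_succ]
        have h2 : finRotate (m + 2) j.castSucc.succ = j.succ.succ := by
          rw [Fin.succ_castSucc, finRotate_succ_apply, Fin.coeSucc_eq_succ]
        rw [h1, h2]
        simp [hu']
    rw [Fin.prod_univ_succ]
    have hmid : (∏ i : Fin (m + 1), g (Bc (u i.succ).1 (u i.succ).2)
        (Ac (u (finRotate (m + 2) i.succ)).1 (u (finRotate (m + 2) i.succ)).2))
        = chaing g (Bc (u 1).1 (u 1).2) (Ac (u 0).1 (u 0).2) (List.ofFn (u' ∘ Fin.succ)) := by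
      have hthis := ih u'
      have e1 : Bc (u' 0).1 (u' 0).2 = Bc (u 1).1 (u 1).2 := by simp [hu', Bc]
      have e2 : Ac (u' 0).1 (u' 0).2 = Ac (u 0).1 (u 0).2 := by simp [hu', Ac]
      rw [e1, e2] at hthis
      rw [← hthis]
      exact Finset.prod_congr rfl fun i _ => by rw [hB, hA]
    have h0 : finRotate (m + 2) 0 = 1 := by rw [finRotate_succ_apply]; rfl
    have hofn : List.ofFn (u ∘ Fin.succ) = u 1 :: List.ofFn (u' ∘ Fin.succ) := by
      rw [List.ofFn_succ]
      refine congrArg₂ _ rfl (congrArg _ (funext fun i => ?_))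
      simp [hu', Function.comp]
    rw [hmid, hofn, h0, chaing]

/-- Sum over orderings + sign choices of chain values: the list form of `Ztilde`. -/
def Fsum (g : α → α → R) {m : ℕ} (x y : α) (v : Fin m → α × α) : R :=
  ∑ ε : Fin m → Bool, ∑ τ : Equiv.Perm (Fin m),
    (∏ i, signR R (ε i)) * chaing g x y (List.ofFn fun i => (v (τ i), ε (τ i)))

section PermSum

variable {γ : Type*} {M : Type*} [AddCommMonoid M]

lemma sum_perm_comp_of_range_eq {m : ℕ} {e₁ e₂ : Fin m → γ}
    (h₁ : Function.Injective e₁) (h₂ : Function.Injective e₂)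
    (h : Set.range e₁ = Set.range e₂) (K : (Fin m → γ) → M) :
    ∑ τ : Equiv.Perm (Fin m), K (e₁ ∘ τ) = ∑ τ : Equiv.Perm (Fin m), K (e₂ ∘ τ) := by
  set ρ : Fin m ≃ Fin m :=
    (Equiv.ofInjective e₁ h₁).trans ((Equiv.setCongr h).trans (Equiv.ofInjective e₂ h₂).symm)
    with hρ
  have hkey : ∀ i, e₂ (ρ i) = e₁ i := by
    intro i
    have := Equiv.apply_ofInjective_symm h₂ ((Equiv.setCongr h) (Equiv.ofInjective e₁ h₁ i))
    simpa [hρ] using this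
  have hcomp : ∀ τ : Equiv.Perm (Fin m), e₁ ∘ τ = e₂ ∘ ((ρ * τ : Equiv.Perm (Fin m)) : Fin m → Fin m) := by
    intro τ
    funext i
    simp [hkey, Equiv.Perm.mul_apply]
  calc ∑ τ : Equiv.Perm (Fin m), K (e₁ ∘ τ)
      = ∑ τ : Equiv.Perm (Fin m), K (e₂ ∘ ((ρ * τ : Equiv.Perm (Fin m)) : Fin m → Fin m)) :=
        Finset.sum_congr rfl fun τ _ => by rw [hcomp]
    _ = ∑ τ : Equiv.Perm (Fin m), K (e₂ ∘ τ) :=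
        Fintype.sum_equiv (Equiv.mulLeft ρ) _ _ (fun τ => rfl)


lemma range_swap_comp_succ {m : ℕ} (j : Fin (m + 1)) :
    Set.range (fun i : Fin m => Equiv.swap 0 j i.succ) = {j}ᶜ := by
  ext x
  simp only [Set.mem_range, Set.mem_compl_iff, Set.mem_singleton_iff]
  constructor
  · rintro ⟨i, rfl⟩ hx
    have h2 : i.succ = (0 : Fin (m + 1)) := by
      have := congrArg (Equiv.swap 0 j) hx
      simpa using this
    exact Fin.succ_ne_zero i h2
  · intro hx
    have hne : Equiv.swap 0 j x ≠ 0 := by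
      intro h0
      apply hx
      have := congrArg (Equiv.swap 0 j) h0
      simpa [Equiv.swap_apply_left] using this
    obtain ⟨i, hi⟩ := Fin.exists_succ_eq.mpr hne
    exact ⟨i, by rw [hi]; simp⟩

lemma sum_perm_succ {m : ℕ} {β : Type*} (u : Fin (m + 1) → β) (H : (Fin (m + 1) → β) → M) :
    ∑ τ : Equiv.Perm (Fin (m + 1)), H (u ∘ τ) =
      ∑ j : Fin (m + 1), ∑ τ' : Equiv.Perm (Fin m),
        H (Fin.cons (u j) (u ∘ j.succAbove ∘ τ')) := by
  rw [← Equiv.sum_comp Equiv.Perm.decomposeFin.symm (fun τ => H (u ∘ τ)),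
    Fintype.sum_prod_type]
  refine Finset.sum_congr rfl fun j _ => ?_
  have key : ∀ τ' : Equiv.Perm (Fin m),
      u ∘ (Equiv.Perm.decomposeFin.symm (j, τ')) =
        Fin.cons (u j) (u ∘ ((fun i : Fin m => Equiv.swap 0 j i.succ) ∘ τ')) := by
    intro τ'
    funext t
    induction t using Fin.cases with
    | zero => simp
    | succ i => simp [Equiv.Perm.decomposeFin_symm_apply_succ, Function.comp]
  have inj1 : Function.Injective (fun i : Fin m => Equiv.swap 0 j i.succ) :=
    fun a b hab => Fin.succ_injective _ ((Equiv.swap 0 j).injective hab)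
  calc ∑ τ' : Equiv.Perm (Fin m), H (u ∘ (Equiv.Perm.decomposeFin.symm (j, τ')))
      = ∑ τ' : Equiv.Perm (Fin m),
          (fun f : Fin m → Fin (m + 1) => H (Fin.cons (u j) (u ∘ f)))
            ((fun i : Fin m => Equiv.swap 0 j i.succ) ∘ τ') := by
        refine Finset.sum_congr rfl fun τ' _ => ?_
        rw [key τ']
    _ = ∑ τ' : Equiv.Perm (Fin m),
          (fun f : Fin m → Fin (m + 1) => H (Fin.cons (u j) (u ∘ f))) (j.succAbove ∘ τ') :=
        sum_perm_comp_of_range_eq inj1 Fin.succAbove_right_injective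
          (by rw [range_swap_comp_succ, Fin.range_succAbove])
          (fun f : Fin m → Fin (m + 1) => H (Fin.cons (u j) (u ∘ f)))
    _ = ∑ τ' : Equiv.Perm (Fin m), H (Fin.cons (u j) (u ∘ j.succAbove ∘ τ')) :=
        Finset.sum_congr rfl fun τ' _ => rfl

end PermSum

section BoolSplit

variable {M : Type*} [AddCommMonoid M]

/-- insert a value at position `j` -/
def jins {m : ℕ} (j : Fin (m + 1)) (e : Bool) (ε' : Fin m → Bool) : Fin (m + 1) → Bool :=
  fun t => (finSuccEquiv' j t).elim e ε'

@[simp] lemma jins_self {m : ℕ} (j : Fin (m + 1)) (e : Bool) (ε' : Fin m → Bool) :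
    jins j e ε' j = e := by simp [jins, finSuccEquiv'_at]

@[simp] lemma jins_succAbove {m : ℕ} (j : Fin (m + 1)) (e : Bool) (ε' : Fin m → Bool)
    (i : Fin m) : jins j e ε' (j.succAbove i) = ε' i := by
  simp [jins, finSuccEquiv'_succAbove]

lemma sum_bool_split {m : ℕ} (j : Fin (m + 1)) (f : (Fin (m + 1) → Bool) → M) :
    ∑ ε : Fin (m + 1) → Bool, f ε = ∑ e : Bool, ∑ ε' : Fin m → Bool, f (jins j e ε') := by
  have h2 : (∑ pe : Bool × (Fin m → Bool), f (jins j pe.1 pe.2))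
      = ∑ e : Bool, ∑ ε' : Fin m → Bool, f (jins j e ε') :=
    Fintype.sum_prod_type _
  rw [← h2]
  refine (Fintype.sum_bijective (fun pe : Bool × (Fin m → Bool) => jins j pe.1 pe.2)
    ⟨?_, ?_⟩ _ _ (fun pe => rfl)).symm
  · intro a b hab
    have h1 : a.1 = b.1 := by
      have := congrFun hab j; simpa using this
    have h2 : a.2 = b.2 := by
      funext i
      have := congrFun hab (j.succAbove i); simpa using this
    exact Prod.ext h1 h2
  · intro ε
    refine ⟨(ε j, ε ∘ j.succAbove), funext fun t => ?_⟩
    refine Fin.succAboveCases j ?_ ?_ t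
    · simp
    · intro i; simp

end BoolSplit

section ZtoF

variable {M : Type*} [AddCommMonoid M]

lemma sum_filter_eps {m : ℕ} (F : (Fin (m + 1) → Bool) → M) :
    ∑ ε ∈ Finset.univ.filter
        (fun ε : Fin (m + 1) → Bool => ∀ i : Fin (m + 1), (i : ℕ) = 0 → ε i = true), F ε
      = ∑ ε' : Fin m → Bool, F (Fin.cons true ε') := by
  refine (Finset.sum_bij (fun ε' _ => Fin.cons true ε') ?_ ?_ ?_ ?_).symm
  · intro ε' _
    refine Finset.mem_filter.mpr ⟨Finset.mem_univ _, fun i hi => ?_⟩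
    have : i = 0 := Fin.ext (by simpa using hi)
    subst this
    simp
  · intro a _ b _ hab
    funext i
    have := congrFun hab i.succ
    simpa using this
  · intro ε hε
    obtain ⟨-, hP⟩ := Finset.mem_filter.mp hε
    refine ⟨fun i => ε i.succ, Finset.mem_univ _, funext fun t => ?_⟩
    induction t using Fin.cases with
    | zero => simpa using (hP 0 rfl).symm
    | succ i => simp
  · intro ε' _
    rfl

lemma sum_filter_perm {m : ℕ} (F : Equiv.Perm (Fin (m + 1)) → M) :
    ∑ σ ∈ Finset.univ.filter
        (fun σ : Equiv.Perm (Fin (m + 1)) => ∀ i : Fin (m + 1), (i : ℕ) = 0 → σ i = i), F σ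
      = ∑ τ : Equiv.Perm (Fin m), F (Equiv.Perm.decomposeFin.symm (0, τ)) := by
  refine (Finset.sum_bij (fun τ _ => Equiv.Perm.decomposeFin.symm (0, τ)) ?_ ?_ ?_ ?_).symm
  · intro τ _
    refine Finset.mem_filter.mpr ⟨Finset.mem_univ _, fun i hi => ?_⟩
    have : i = 0 := Fin.ext (by simpa using hi)
    subst this
    simp
  · intro a _ b _ hab
    have := Equiv.Perm.decomposeFin.symm.injective hab
    exact (Prod.mk.injEq _ _ _ _ ▸ this).2
  · intro σ hσ
    obtain ⟨-, hP⟩ := Finset.mem_filter.mp hσ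
    refine ⟨(Equiv.Perm.decomposeFin σ).2, Finset.mem_univ _, ?_⟩
    have h1 : σ 0 = 0 := hP 0 rfl
    have h2 : Equiv.Perm.decomposeFin.symm (Equiv.Perm.decomposeFin σ) = σ :=
      Equiv.Perm.decomposeFin.symm_apply_apply σ
    have h3 : (Equiv.Perm.decomposeFin σ).1 = 0 := by
      have h4 : σ 0 = (Equiv.Perm.decomposeFin σ).1 := by
        conv_lhs => rw [← h2]
        exact Equiv.Perm.decomposeFin_symm_apply_zero _ _
      rw [← h4, h1]
    show Equiv.Perm.decomposeFin.symm (0, (Equiv.Perm.decomposeFin σ).2) = σ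
    rw [← h3]
    exact h2
  · intro τ _
    rfl

end ZtoF

lemma Ztilde_eq_Fsum (g : α → α → R) {m : ℕ} (p : Fin (m + 1) → α × α) :
    Ztilde g p = Fsum g (p 0).2 (p 0).1 (p ∘ Fin.succ) := by
  unfold Ztilde Fsum
  rw [sum_filter_eps]
  refine Finset.sum_congr rfl fun ε' _ => ?_
  rw [sum_filter_perm]
  refine Finset.sum_congr rfl fun τ _ => ?_
  set ε : Fin (m + 1) → Bool := Fin.cons true ε' with hε
  set σ : Equiv.Perm (Fin (m + 1)) := Equiv.Perm.decomposeFin.symm (0, τ) with hσ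
  have hσ0 : σ 0 = 0 := Equiv.Perm.decomposeFin_symm_apply_zero 0 τ
  have hσs : ∀ i : Fin m, σ i.succ = (τ i).succ := by
    intro i
    rw [hσ, Equiv.Perm.decomposeFin_symm_apply_succ]
    simp
  rw [Finset.prod_mul_distrib]
  have hsign : (∏ t : Fin (m + 1), signR R (ε (σ t))) = ∏ i : Fin m, signR R (ε' i) := by
    rw [Equiv.prod_comp σ (fun t => signR R (ε t)), Fin.prod_univ_succ]
    simp [hε, signR]
  have hcyc : (∏ t : Fin (m + 1), g (Bc (p (σ t)) (ε (σ t)))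
        (Ac (p (σ (finRotate (m + 1) t))) (ε (σ (finRotate (m + 1) t)))))
      = chaing g (p 0).2 (p 0).1
          (List.ofFn fun i => ((p ∘ Fin.succ) (τ i), ε' (τ i))) := by
    have := prod_cycle_eq_chaing g (fun t => (p (σ t), ε (σ t)))
    simp only at this
    rw [this]
    have e0 : σ (0 : Fin (m + 1)) = 0 := hσ0
    rw [e0]
    have eb : Bc (p 0) (ε 0) = (p 0).2 := by simp [hε, Bc]
    have ea : Ac (p 0) (ε 0) = (p 0).1 := by simp [hε, Ac]
    rw [eb, ea]
    have hl : (List.ofFn ((fun t => (p (σ t), ε (σ t))) ∘ Fin.succ))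
        = List.ofFn fun i => ((p ∘ Fin.succ) (τ i), ε' (τ i)) := by
      refine congrArg _ (funext fun i => ?_)
      simp [Function.comp, hσs, hε]
    rw [hl]
  rw [hsign, hcyc]

lemma Fsum_succ (g : α → α → R) {m : ℕ} (x y : α) (v : Fin (m + 1) → α × α) :
    Fsum g x y v = ∑ j : Fin (m + 1), ∑ e : Bool,
      signR R e * g x (Ac (v j) e) * Fsum g (Bc (v j) e) y (v ∘ j.succAbove) := by
  unfold Fsum
  calc
    (∑ ε : Fin (m + 1) → Bool, ∑ τ : Equiv.Perm (Fin (m + 1)),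
        (∏ i, signR R (ε i)) * chaing g x y (List.ofFn fun i => (v (τ i), ε (τ i))))
      = ∑ ε : Fin (m + 1) → Bool, ∑ j : Fin (m + 1), ∑ τ' : Equiv.Perm (Fin m),
          (∏ i, signR R (ε i)) * chaing g x y
            (List.ofFn (Fin.cons (v j, ε j)
              (fun i => (v (j.succAbove (τ' i)), ε (j.succAbove (τ' i)))))) := by
        refine Finset.sum_congr rfl fun ε _ => ?_
        exact sum_perm_succ (fun t => (v t, ε t))
          (fun w => (∏ i, signR R (ε i)) * chaing g x y (List.ofFn w))
    _ = ∑ j : Fin (m + 1), ∑ ε : Fin (m + 1) → Bool, ∑ τ' : Equiv.Perm (Fin m),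
          (∏ i, signR R (ε i)) * chaing g x y
            (List.ofFn (Fin.cons (v j, ε j)
              (fun i => (v (j.succAbove (τ' i)), ε (j.succAbove (τ' i)))))) :=
        Finset.sum_comm
    _ = ∑ j : Fin (m + 1), ∑ e : Bool,
          signR R e * g x (Ac (v j) e) * Fsum g (Bc (v j) e) y (v ∘ j.succAbove) := by
        refine Finset.sum_congr rfl fun j _ => ?_
        refine Eq.trans (sum_bool_split j (fun ε => ∑ τ' : Equiv.Perm (Fin m),
          (∏ i, signR R (ε i)) * chaing g x y
            (List.ofFn (Fin.cons (v j, ε j)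
              (fun i => (v (j.succAbove (τ' i)), ε (j.succAbove (τ' i)))))))) ?_
        refine Finset.sum_congr rfl fun e _ => ?_
        unfold Fsum
        rw [Finset.mul_sum]
        refine Finset.sum_congr rfl fun ε₂ _ => ?_
        rw [Finset.mul_sum]
        refine Finset.sum_congr rfl fun τ' _ => ?_
        have hprod : (∏ i, signR R (jins j e ε₂ i))
            = signR R e * ∏ i, signR R (ε₂ i) := by
          rw [Fin.prod_univ_succAbove (fun i => signR R (jins j e ε₂ i)) j]
          simp
        have hlist : List.ofFn (Fin.cons ((v j, jins j e ε₂ j))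
              (fun i => (v (j.succAbove (τ' i)), jins j e ε₂ (j.succAbove (τ' i)))))
            = (v j, e) :: List.ofFn (fun i => ((v ∘ j.succAbove) (τ' i), ε₂ (τ' i))) := by
          rw [List.ofFn_succ]
          simp [Function.comp]
        rw [hprod, hlist, chaing]
        ring

section Exch

variable {M : Type*} [AddCommMonoid M]

lemma pair_compl_card {m : ℕ} {a c : Fin (m + 2)} (h : a ≠ c) :
    ({a, c}ᶜ : Finset (Fin (m + 2))).card = m := by
  rw [Finset.card_compl, Finset.card_insert_of_notMem (by simpa using h),
    Finset.card_singleton, Fintype.card_fin]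
  omega

/-- the canonical monotone enumeration of the complement of a pair -/
noncomputable def Epair {m : ℕ} (z : Fin (m + 2) × Fin (m + 2)) : Fin m → Fin (m + 2) :=
  if h : ({z.1, z.2}ᶜ : Finset (Fin (m + 2))).card = m
    then ⇑(Finset.orderEmbOfFin _ h) else fun _ => 0

lemma Epair_symm {m : ℕ} (x y : Fin (m + 2)) : Epair (x, y) = Epair (y, x) := by
  unfold Epair
  rw [show ({x, y} : Finset (Fin (m + 2))) = {y, x} from Finset.pair_comm x y]

lemma comp_succAbove_eq_Epair {m : ℕ} (a : Fin (m + 2)) (b : Fin (m + 1)) :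
    a.succAbove ∘ b.succAbove = Epair (a, a.succAbove b) := by
  have hne : a ≠ a.succAbove b := (Fin.succAbove_ne a b).symm
  unfold Epair
  rw [dif_pos (pair_compl_card hne)]
  refine Finset.orderEmbOfFin_unique _ (fun i => ?_)
    ((Fin.strictMono_succAbove a).comp (Fin.strictMono_succAbove b))
  simp only [Finset.mem_compl, Finset.mem_insert, Finset.mem_singleton, Function.comp]
  push_neg
  exact ⟨Fin.succAbove_ne a (b.succAbove i),
    fun hcontra => Fin.succAbove_ne b i (Fin.succAbove_right_injective hcontra)⟩

lemma exch {m : ℕ} (G : Fin (m + 2) → Fin (m + 2) → (Fin m → Fin (m + 2)) → M) :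
    (∑ z : Fin (m + 2) × Fin (m + 1),
        G z.1 (z.1.succAbove z.2) (z.1.succAbove ∘ z.2.succAbove))
      = ∑ z : Fin (m + 2) × Fin (m + 1),
          G (z.1.succAbove z.2) z.1 (z.1.succAbove ∘ z.2.succAbove) := by
  have h1 : (∑ z : Fin (m + 2) × Fin (m + 1),
        G z.1 (z.1.succAbove z.2) (z.1.succAbove ∘ z.2.succAbove))
      = ∑ z ∈ Finset.univ.offDiag, G z.1 z.2 (Epair z) := by
    refine Finset.sum_bij (fun z _ => (z.1, z.1.succAbove z.2)) ?_ ?_ ?_ ?_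
    · intro z _
      exact Finset.mem_offDiag.mpr
        ⟨Finset.mem_univ _, Finset.mem_univ _, (Fin.succAbove_ne z.1 z.2).symm⟩
    · intro z₁ _ z₂ _ hz
      have hz' : (z₁.1, z₁.1.succAbove z₁.2) = (z₂.1, z₂.1.succAbove z₂.2) := hz
      have h1 : z₁.1 = z₂.1 := (Prod.ext_iff.mp hz').1
      have h2 : z₁.1.succAbove z₁.2 = z₂.1.succAbove z₂.2 := (Prod.ext_iff.mp hz').2
      rw [h1] at h2
      exact Prod.ext h1 (Fin.succAbove_right_injective h2)
    · intro z hz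
      obtain ⟨-, -, hne⟩ := Finset.mem_offDiag.mp hz
      obtain ⟨k, hk⟩ := Fin.exists_succAbove_eq hne.symm
      exact ⟨(z.1, k), Finset.mem_univ _, Prod.ext rfl hk⟩
    · intro z _
      rw [comp_succAbove_eq_Epair]
  have h2 : (∑ z : Fin (m + 2) × Fin (m + 1),
        G (z.1.succAbove z.2) z.1 (z.1.succAbove ∘ z.2.succAbove))
      = ∑ z ∈ Finset.univ.offDiag, G z.1 z.2 (Epair z) := by
    refine Finset.sum_bij (fun z _ => (z.1.succAbove z.2, z.1)) ?_ ?_ ?_ ?_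
    · intro z _
      exact Finset.mem_offDiag.mpr
        ⟨Finset.mem_univ _, Finset.mem_univ _, Fin.succAbove_ne z.1 z.2⟩
    · intro z₁ _ z₂ _ hz
      have hz' : (z₁.1.succAbove z₁.2, z₁.1) = (z₂.1.succAbove z₂.2, z₂.1) := hz
      have h1 : z₁.1 = z₂.1 := (Prod.ext_iff.mp hz').2
      have h2 : z₁.1.succAbove z₁.2 = z₂.1.succAbove z₂.2 := (Prod.ext_iff.mp hz').1
      rw [h1] at h2
      exact Prod.ext h1 (Fin.succAbove_right_injective h2)
    · intro z hz
      obtain ⟨-, -, hne⟩ := Finset.mem_offDiag.mp hz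
      obtain ⟨k, hk⟩ := Fin.exists_succAbove_eq hne
      exact ⟨(z.2, k), Finset.mem_univ _, Prod.ext hk rfl⟩
    · intro z _
      rw [comp_succAbove_eq_Epair, Epair_symm]
  rw [h1, h2]

end Exch

lemma Fsum_zero (g : α → α → R) (x y : α) (v : Fin 0 → α × α) : Fsum g x y v = g x y := by
  unfold Fsum
  rw [Finset.univ_unique, Finset.univ_unique, Finset.sum_singleton, Finset.sum_singleton]
  simp [chaing]

lemma Fsum_snoc (g : α → α → R) : ∀ {m : ℕ} (x y : α) (v : Fin (m + 1) → α × α),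
    Fsum g x y v = ∑ j : Fin (m + 1), ∑ e : Bool,
      signR R e * (Fsum g x (Ac (v j) e) (v ∘ j.succAbove) * g (Bc (v j) e) y) := by
  intro m
  induction m with
  | zero =>
    intro x y v
    rw [Fsum_succ]
    refine Finset.sum_congr rfl fun j _ => Finset.sum_congr rfl fun e _ => ?_
    rw [Fsum_zero, Fsum_zero]
    ring
  | succ m ih =>
    intro x y v
    have claim1 : Fsum g x y v = ∑ a : Fin (m + 2), ∑ b : Fin (m + 1),
        (fun (a c : Fin (m + 2)) (w : Fin m → Fin (m + 2)) =>
          ∑ e₁ : Bool, ∑ e₂ : Bool,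
            signR R e₁ * signR R e₂ * g x (Ac (v a) e₁) *
              Fsum g (Bc (v a) e₁) (Ac (v c) e₂) (v ∘ w) * g (Bc (v c) e₂) y)
          a (a.succAbove b) (a.succAbove ∘ b.succAbove) := by
      rw [Fsum_succ g x y v]
      refine Finset.sum_congr rfl fun a _ => ?_
      calc (∑ e₁ : Bool, signR R e₁ * g x (Ac (v a) e₁) *
              Fsum g (Bc (v a) e₁) y (v ∘ a.succAbove))
          = ∑ e₁ : Bool, ∑ b : Fin (m + 1), ∑ e₂ : Bool,
              signR R e₁ * g x (Ac (v a) e₁) *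
                (signR R e₂ * (Fsum g (Bc (v a) e₁) (Ac ((v ∘ a.succAbove) b) e₂)
                  ((v ∘ a.succAbove) ∘ b.succAbove) * g (Bc ((v ∘ a.succAbove) b) e₂) y)) := by
            refine Finset.sum_congr rfl fun e₁ _ => ?_
            rw [ih (Bc (v a) e₁) y (v ∘ a.succAbove), Finset.mul_sum]
            refine Finset.sum_congr rfl fun b _ => ?_
            rw [Finset.mul_sum]
        _ = ∑ b : Fin (m + 1), ∑ e₁ : Bool, ∑ e₂ : Bool,
              signR R e₁ * signR R e₂ * g x (Ac (v a) e₁) *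
                Fsum g (Bc (v a) e₁) (Ac (v (a.succAbove b)) e₂)
                  (v ∘ (a.succAbove ∘ b.succAbove)) * g (Bc (v (a.succAbove b)) e₂) y := by
            rw [Finset.sum_comm]
            refine Finset.sum_congr rfl fun b _ => Finset.sum_congr rfl fun e₁ _ =>
              Finset.sum_congr rfl fun e₂ _ => ?_
            rw [show ((v ∘ a.succAbove) ∘ b.succAbove) = v ∘ a.succAbove ∘ b.succAbove
              from rfl, show ((v ∘ a.succAbove) b) = v (a.succAbove b) from rfl]
            ring
    have claim2 : (∑ j : Fin (m + 2), ∑ e : Bool,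
          signR R e * (Fsum g x (Ac (v j) e) (v ∘ j.succAbove) * g (Bc (v j) e) y))
        = ∑ a : Fin (m + 2), ∑ b : Fin (m + 1),
        (fun (a c : Fin (m + 2)) (w : Fin m → Fin (m + 2)) =>
          ∑ e₁ : Bool, ∑ e₂ : Bool,
            signR R e₁ * signR R e₂ * g x (Ac (v a) e₁) *
              Fsum g (Bc (v a) e₁) (Ac (v c) e₂) (v ∘ w) * g (Bc (v c) e₂) y)
          (a.succAbove b) a (a.succAbove ∘ b.succAbove) := by
      refine Finset.sum_congr rfl fun a _ => ?_
      calc (∑ e : Bool, signR R e *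
              (Fsum g x (Ac (v a) e) (v ∘ a.succAbove) * g (Bc (v a) e) y))
          = ∑ e : Bool, ∑ b : Fin (m + 1), ∑ e' : Bool,
              signR R e * (signR R e' * g x (Ac ((v ∘ a.succAbove) b) e') *
                Fsum g (Bc ((v ∘ a.succAbove) b) e') (Ac (v a) e)
                  ((v ∘ a.succAbove) ∘ b.succAbove) * g (Bc (v a) e) y) := by
            refine Finset.sum_congr rfl fun e _ => ?_
            rw [Fsum_succ g x (Ac (v a) e) (v ∘ a.succAbove)]
            simp only [Finset.sum_mul, Finset.mul_sum]
        _ = ∑ b : Fin (m + 1), ∑ e' : Bool, ∑ e : Bool,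
              signR R e' * signR R e * g x (Ac (v (a.succAbove b)) e') *
                Fsum g (Bc (v (a.succAbove b)) e') (Ac (v a) e)
                  (v ∘ (a.succAbove ∘ b.succAbove)) * g (Bc (v a) e) y := by
            rw [Finset.sum_comm]
            refine Finset.sum_congr rfl fun b _ => ?_
            rw [Finset.sum_comm]
            refine Finset.sum_congr rfl fun e' _ => Finset.sum_congr rfl fun e _ => ?_
            rw [show ((v ∘ a.succAbove) ∘ b.succAbove) = v ∘ a.succAbove ∘ b.succAbove
              from rfl, show ((v ∘ a.succAbove) b) = v (a.succAbove b) from rfl]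
            ring
    rw [claim1, claim2]
    have h1 := Fintype.sum_prod_type (fun z : Fin (m + 2) × Fin (m + 1) =>
        (fun (a c : Fin (m + 2)) (w : Fin m → Fin (m + 2)) =>
          ∑ e₁ : Bool, ∑ e₂ : Bool,
            signR R e₁ * signR R e₂ * g x (Ac (v a) e₁) *
              Fsum g (Bc (v a) e₁) (Ac (v c) e₂) (v ∘ w) * g (Bc (v c) e₂) y)
          z.1 (z.1.succAbove z.2) (z.1.succAbove ∘ z.2.succAbove))
    have h2 := Fintype.sum_prod_type (fun z : Fin (m + 2) × Fin (m + 1) =>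
        (fun (a c : Fin (m + 2)) (w : Fin m → Fin (m + 2)) =>
          ∑ e₁ : Bool, ∑ e₂ : Bool,
            signR R e₁ * signR R e₂ * g x (Ac (v a) e₁) *
              Fsum g (Bc (v a) e₁) (Ac (v c) e₂) (v ∘ w) * g (Bc (v c) e₂) y)
          (z.1.succAbove z.2) z.1 (z.1.succAbove ∘ z.2.succAbove))
    rw [← h1, ← h2]
    exact exch (fun (a c : Fin (m + 2)) (w : Fin m → Fin (m + 2)) =>
      ∑ e₁ : Bool, ∑ e₂ : Bool,
        signR R e₁ * signR R e₂ * g x (Ac (v a) e₁) *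
          Fsum g (Bc (v a) e₁) (Ac (v c) e₂) (v ∘ w) * g (Bc (v c) e₂) y)

end ZtildeAux

open ZtildeAux

/-- Recursion for the `Z̃`-sum (the analogue of (IW) used in the appendix): for `k ≥ 2`
(here `k = n + 2`),
`Z̃_g((a_1,b_1),p_2,…,p_k) − Z̃_g((b_1,a_1),p_2,…,p_k)
  = Σ_{l=2}^k [ Z̃_g((a_l,b_1),P_l)·g(b_l,a_1) + Z̃_g((b_1,a_l),P_l)·g(a_1,b_l)
    − Z̃_g((b_l,b_1),P_l)·g(a_l,a_1) − Z̃_g((b_1,b_l),P_l)·g(a_1,a_l) ]`,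
where `P_l` is the tuple `(a_2,b_2),…,(a_k,b_k)` with the `l`-th pair removed
(realized via `Fin.succAbove l` and updating the first entry). -/
theorem Ztilde_recursion {R α : Type*} [CommRing R] {n : ℕ}
    (p : Fin (n + 2) → α × α) (g : α → α → R) :
    Ztilde g p - Ztilde g (Function.update p 0 ((p 0).2, (p 0).1)) =
      ∑ l ∈ Finset.univ.filter (fun l : Fin (n + 2) => l ≠ 0),
        (Ztilde g (Function.update (p ∘ l.succAbove) 0 ((p l).1, (p 0).2)) * g (p l).2 (p 0).1
          + Ztilde g (Function.update (p ∘ l.succAbove) 0 ((p 0).2, (p l).1)) * g (p 0).1 (p l).2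
          - Ztilde g (Function.update (p ∘ l.succAbove) 0 ((p l).2, (p 0).2)) * g (p l).1 (p 0).1
          - Ztilde g (Function.update (p ∘ l.succAbove) 0 ((p 0).2, (p l).2)) * g (p 0).1 (p l).1)
    := by
  classical
  have hsub : ∀ (j : Fin (n + 1)) (q : α × α),
      Ztilde g (Function.update (p ∘ (j.succ).succAbove) 0 q)
        = Fsum g q.2 q.1 ((p ∘ Fin.succ) ∘ j.succAbove) := by
    intro j q
    rw [Ztilde_eq_Fsum]
    have h0 : Function.update (p ∘ (j.succ).succAbove) 0 q 0 = q :=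
      Function.update_self _ _ _
    have htup : Function.update (p ∘ (j.succ).succAbove) 0 q ∘ Fin.succ
        = (p ∘ Fin.succ) ∘ j.succAbove := by
      funext i
      show Function.update (p ∘ (j.succ).succAbove) 0 q i.succ = p (j.succAbove i).succ
      rw [Function.update_of_ne (Fin.succ_ne_zero i)]
      show p ((j.succ).succAbove i.succ) = p (j.succAbove i).succ
      rw [Fin.succ_succAbove_succ]
    rw [h0, htup]
  have h1 : Function.update p 0 ((p 0).2, (p 0).1) 0 = ((p 0).2, (p 0).1) :=
    Function.update_self _ _ _
  have h2 : Function.update p 0 ((p 0).2, (p 0).1) ∘ Fin.succ = p ∘ Fin.succ := by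
    funext i
    exact Function.update_of_ne (Fin.succ_ne_zero i) _ _
  rw [Ztilde_eq_Fsum g p, Ztilde_eq_Fsum g (Function.update p 0 ((p 0).2, (p 0).1)),
    h1, h2]
  rw [Fsum_snoc g (p 0).2 (p 0).1 (p ∘ Fin.succ),
    Fsum_succ g ((p 0).2, (p 0).1).2 ((p 0).2, (p 0).1).1 (p ∘ Fin.succ)]
  rw [← Finset.sum_sub_distrib]
  refine Finset.sum_bij (fun (j : Fin (n + 1)) _ => j.succ) ?_ ?_ ?_ ?_
  · intro j _
    exact Finset.mem_filter.mpr ⟨Finset.mem_univ _, Fin.succ_ne_zero j⟩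
  · intro a _ b _ hab
    exact Fin.succ_injective _ hab
  · intro l hl
    obtain ⟨-, hne⟩ := Finset.mem_filter.mp hl
    obtain ⟨j, hj⟩ := Fin.exists_succ_eq.mpr hne
    exact ⟨j, Finset.mem_univ _, hj⟩
  · intro j _
    rw [hsub j ((p j.succ).1, (p 0).2), hsub j ((p 0).2, (p j.succ).1),
      hsub j ((p j.succ).2, (p 0).2), hsub j ((p 0).2, (p j.succ).2)]
    simp only [Fintype.sum_bool, signR, Ac, Bc, Function.comp_apply, if_true,
      Bool.false_eq_true, if_false]
    ring
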